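/- Let X = ℝ with the Borel σ-algebra, let μ be the probability measure with density h(x) = 1/(π(1 + x²)) with respect to Lebesgue measure (the standard Cauchy distribution), let f(x) = x + 1, and let 1 ≤ p < ∞. Then the composition operator T_f(φ) = φ ∘ f is a well-defined invertible bounded linear operator on L^p(ℝ, μ), and T_f does NOT have the shadowing property. -/

import Mathlib

open MeasureTheory Filter Set Function Topology ENNReal

noncomputable section

namespace GHShadow

/-- The shadowing property for an invertible bounded linear operator. -/
def HasShadowing {E : Type*} [NormedAddCommGroup E] [NormedSpace ℝ E]
    (T : E ≃L[ℝ] E) : Prop :=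
  ∀ ε : ℝ, 0 < ε → ∃ δ : ℝ, 0 < δ ∧ ∀ x : ℤ → E,
    (∀ n : ℤ, ‖T (x n) - x (n + 1)‖ ≤ δ) →
      ∃ y : E, ∀ n : ℤ, ‖(T ^ n) y - x n‖ < ε

/-- `lim ‖Tⁿ‖^{1/n}` exists and is `< 1`. -/
def SpectralRadiusLtOne {E : Type*} [NormedAddCommGroup E] [NormedSpace ℝ E]
    (T : E →L[ℝ] E) : Prop :=
  ∃ r : ℝ, r < 1 ∧ Tendsto (fun n : ℕ => ‖T ^ n‖ ^ (1 / (n : ℝ))) atTop (nhds r)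

/-- The restriction of `T` to `M` has spectral radius `< 1`
(equivalently, is a proper contraction in an equivalent norm). -/
def ContractsOn {E : Type*} [NormedAddCommGroup E] [NormedSpace ℝ E]
    (T : E ≃L[ℝ] E) (M : Submodule ℝ E) : Prop :=
  ∃ C : ℝ, 0 < C ∧ ∃ t : ℝ, 0 < t ∧ t < 1 ∧
    ∀ n : ℕ, ∀ x ∈ M, ‖(T ^ n) x‖ ≤ C * t ^ n * ‖x‖

def GeneralizedHyperbolic {E : Type*} [NormedAddCommGroup E] [NormedSpace ℝ E]
    (T : E ≃L[ℝ] E) : Prop :=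
  ∃ M N : Submodule ℝ E, IsClosed (M : Set E) ∧ IsClosed (N : Set E) ∧
    IsCompl M N ∧ (∀ x ∈ M, T x ∈ M) ∧ (∀ x ∈ N, T.symm x ∈ N) ∧
    ContractsOn T M ∧ ContractsOn T.symm N

variable {X : Type*} [MeasurableSpace X]

/-- image of `B` under the `k`-th iterate of the invertible map `f`. -/
def img (f : Equiv.Perm X) (k : ℤ) (B : Set X) : Set X := ⇑(f ^ k) '' B

/-- `(X, 𝓑, μ, f)` is a dissipative system generated by `W`. -/
structure IsDissipative (μ : Measure X) (f : Equiv.Perm X) (W : Set X) : Prop where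
  sigmaFin : SigmaFinite μ
  meas_f : Measurable f
  meas_symm : Measurable f.symm
  meas_W : MeasurableSet W
  pos : 0 < μ W
  fin : μ W < ⊤
  disj : Pairwise fun k l : ℤ => Disjoint (img f k W) (img f l W)
  cover : (⋃ k : ℤ, img f k W) = univ

/-- `f` is of bounded distortion on `W` with constant `K`. -/
def BoundedDistortion (μ : Measure X) (f : Equiv.Perm X) (W : Set X) (K : ℝ≥0∞) : Prop :=
  ∀ k : ℤ, ∀ B : Set X, MeasurableSet B → B ⊆ W →
    (1 / K) * (μ (img f k W) * μ B) ≤ μ (img f k B) * μ W ∧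
      μ (img f k B) * μ W ≤ K * (μ (img f k W) * μ B)

/-- condition (⋆) for a transformation `g`. -/
def CondStar (μ : Measure X) (g : X → X) : Prop :=
  ∃ c : ℝ≥0∞, 0 < c ∧ c ≠ ⊤ ∧ ∀ B : Set X, MeasurableSet B → μ (g ⁻¹' B) ≤ c * μ B

/-- condition 𝓗𝓒. -/
def CondHC (μ : Measure X) (f : Equiv.Perm X) (W : Set X) : Prop :=
  limsup (fun n : ℕ =>
    ⨆ k : ℤ, (μ (img f k W) / μ (img f (k + (n : ℤ)) W)) ^ (1 / (n : ℝ))) atTop < 1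

/-- condition 𝓗𝓓. -/
def CondHD (μ : Measure X) (f : Equiv.Perm X) (W : Set X) : Prop :=
  1 < liminf (fun n : ℕ =>
    ⨅ k : ℤ, (μ (img f k W) / μ (img f (k + (n : ℤ)) W)) ^ (1 / (n : ℝ))) atTop

/-- condition 𝓖𝓗. -/
def CondGH (μ : Measure X) (f : Equiv.Perm X) (W : Set X) : Prop :=
  limsup (fun n : ℕ =>
      ⨆ m : ℕ, (μ (img f (-(m : ℤ) - (n : ℤ)) W) / μ (img f (-(m : ℤ)) W)) ^ (1 / (n : ℝ)))
      atTop < 1 ∧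
  1 < liminf (fun n : ℕ =>
      ⨅ m : ℕ, (μ (img f (m : ℤ) W) / μ (img f ((m : ℤ) + (n : ℤ)) W)) ^ (1 / (n : ℝ))) atTop

/-- `T` represents the composition operator `φ ↦ φ ∘ f` on `L^p(X,μ)`. -/
def RepsComp (μ : Measure X) (p : ℝ≥0∞) [Fact (1 ≤ p)] (f : X → X)
    (T : Lp ℝ p μ ≃L[ℝ] Lp ℝ p μ) : Prop :=
  ∀ φ : Lp ℝ p μ, ⇑(T φ) =ᵐ[μ] fun x => (φ : X → ℝ) (f x)


/-- The standard Cauchy distribution on `ℝ`: density `1/(π(1+x²))` w.r.t. Lebesgue. -/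
def cauchyMeasure : Measure ℝ :=
  (volume : Measure ℝ).withDensity fun x => ENNReal.ofReal (1 / (Real.pi * (1 + x ^ 2)))



namespace CauchyAux

local notation "mc" => cauchyMeasure

/-- The density of the Cauchy measure. -/
def den (x : ℝ) : ℝ≥0∞ := ENNReal.ofReal (1 / (Real.pi * (1 + x ^ 2)))

lemma cauchy_eq : cauchyMeasure = (volume : Measure ℝ).withDensity den := rfl

lemma den_meas : Measurable den := by
  apply Measurable.ennreal_ofReal
  exact Measurable.div measurable_const
    (measurable_const.mul (measurable_const.add (measurable_id.pow_const 2)))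

lemma den_translate_le (c y : ℝ) :
    den (y - c) ≤ ENNReal.ofReal (2 + 2 * c ^ 2) * den y := by
  have hpi := Real.pi_pos
  rw [den, den, ← ENNReal.ofReal_mul (by positivity)]
  apply ENNReal.ofReal_le_ofReal
  have h1 : (0:ℝ) < Real.pi * (1 + (y - c) ^ 2) := by positivity
  have h2 : (0:ℝ) < Real.pi * (1 + y ^ 2) := by positivity
  rw [mul_one_div, div_le_div_iff₀ h1 h2]
  nlinarith [sq_nonneg (y - 2*c), sq_nonneg (c * (y - c)),
    mul_nonneg hpi.le (sq_nonneg (y - 2*c)), mul_nonneg hpi.le (sq_nonneg (c * (y - c)))]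

lemma lintegral_comp_add (c : ℝ) {g : ℝ → ℝ≥0∞} (hg : Measurable g) :
    ∫⁻ x, g (x + c) ∂mc ≤ ENNReal.ofReal (2 + 2 * c ^ 2) * ∫⁻ x, g x ∂mc := by
  have h1 : ∫⁻ x, g (x + c) ∂mc = ∫⁻ x, den x * g (x + c) ∂(volume : Measure ℝ) :=
    lintegral_withDensity_eq_lintegral_mul _ den_meas (hg.comp (measurable_add_const c))
  have h2 : ∫⁻ x, den x * g (x + c) ∂(volume : Measure ℝ)
      = ∫⁻ y, den (y - c) * g y ∂(volume : Measure ℝ) := by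
    have h := lintegral_add_right_eq_self (μ := (volume : Measure ℝ))
      (fun y => den (y - c) * g y) c
    simpa [add_sub_cancel_right] using h
  have h3 : ∫⁻ x, g x ∂mc = ∫⁻ x, den x * g x ∂(volume : Measure ℝ) :=
    lintegral_withDensity_eq_lintegral_mul _ den_meas hg
  rw [h1, h2, h3, ← lintegral_const_mul _ (show Measurable (fun x => den x * g x) from den_meas.mul hg)]
  exact lintegral_mono fun y => by
    rw [← mul_assoc]; exact mul_le_mul_left (den_translate_le c y) _

lemma qmp (c : ℝ) : Measure.QuasiMeasurePreserving (fun x => x + c) mc mc := by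
  refine ⟨measurable_add_const c, Measure.AbsolutelyContinuous.mk fun s hs h0 => ?_⟩
  rw [Measure.map_apply (measurable_add_const c) hs]
  have hmeas : Measurable (s.indicator (1 : ℝ → ℝ≥0∞)) :=
    measurable_one.indicator hs
  have h1 : mc ((fun x => x + c) ⁻¹' s)
      = ∫⁻ x, s.indicator (1 : ℝ → ℝ≥0∞) (x + c) ∂mc := by
    rw [← lintegral_indicator_one (hs.preimage (measurable_add_const c))]
    refine lintegral_congr fun x => ?_
    classical
    rw [Set.indicator_apply, Set.indicator_apply, Set.mem_preimage]
    simp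
  have h2 := lintegral_comp_add c hmeas
  rw [lintegral_indicator_one hs, h0, mul_zero] at h2
  rw [h1]
  exact le_antisymm h2 (by positivity)

lemma ae_comp {g₁ g₂ : ℝ → ℝ} (c : ℝ) (h : g₁ =ᵐ[mc] g₂) :
    (fun x => g₁ (x + c)) =ᵐ[mc] fun x => g₂ (x + c) := (qmp c).ae_eq h

variable {p : ℝ≥0∞} [Fact (1 ≤ p)]

lemma p_ne_zero : p ≠ 0 := by
  intro h
  have h1 : (1:ℝ≥0∞) ≤ p := Fact.out
  rw [h] at h1
  simp at h1

lemma one_le_toReal (hp : p ≠ ∞) : 1 ≤ p.toReal := by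
  have h := ENNReal.toReal_mono hp (Fact.out : 1 ≤ p)
  simpa using h

lemma eLpNorm_comp_add_le (hp : p ≠ ∞) (c : ℝ) {g : ℝ → ℝ}
    (hg : AEStronglyMeasurable g mc) :
    eLpNorm (fun x => g (x + c)) p mc ≤
      ENNReal.ofReal ((2 + 2 * c ^ 2) ^ (1 / p.toReal)) * eLpNorm g p mc := by
  have hp0 : p ≠ 0 := p_ne_zero
  set G := hg.mk g with hGdef
  have hGmeas : Measurable G := hg.stronglyMeasurable_mk.measurable
  have hgG : g =ᵐ[mc] G := hg.ae_eq_mk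
  have e1 : eLpNorm (fun x => g (x + c)) p mc = eLpNorm (fun x => G (x + c)) p mc :=
    eLpNorm_congr_ae (ae_comp c hgG)
  have e2 : eLpNorm g p mc = eLpNorm G p mc := eLpNorm_congr_ae hgG
  rw [e1, e2, eLpNorm_eq_lintegral_rpow_enorm_toReal hp0 hp,
    eLpNorm_eq_lintegral_rpow_enorm_toReal hp0 hp]
  have hFmeas : Measurable fun x => (‖G x‖₊ : ℝ≥0∞) ^ p.toReal :=
    ENNReal.continuous_rpow_const.measurable.comp
      (measurable_coe_nnreal_ennreal.comp hGmeas.nnnorm)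
  have key := lintegral_comp_add c hFmeas
  have hs : (0:ℝ) ≤ 1 / p.toReal := by positivity
  calc (∫⁻ x, (‖G (x + c)‖₊ : ℝ≥0∞) ^ p.toReal ∂mc) ^ (1 / p.toReal)
      ≤ (ENNReal.ofReal (2 + 2 * c ^ 2) *
          ∫⁻ x, (‖G x‖₊ : ℝ≥0∞) ^ p.toReal ∂mc) ^ (1 / p.toReal) :=
        ENNReal.rpow_le_rpow key hs
    _ = (ENNReal.ofReal (2 + 2 * c ^ 2)) ^ (1 / p.toReal) *
          (∫⁻ x, (‖G x‖₊ : ℝ≥0∞) ^ p.toReal ∂mc) ^ (1 / p.toReal) :=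
        ENNReal.mul_rpow_of_nonneg _ _ hs
    _ = ENNReal.ofReal ((2 + 2 * c ^ 2) ^ (1 / p.toReal)) *
          (∫⁻ x, (‖G x‖₊ : ℝ≥0∞) ^ p.toReal ∂mc) ^ (1 / p.toReal) := by
        rw [← ENNReal.ofReal_rpow_of_pos (by positivity)]

lemma memLp_comp (hp : p ≠ ∞) (c : ℝ) {g : ℝ → ℝ} (hg : MemLp g p mc) :
    MemLp (fun x => g (x + c)) p mc := by
  refine ⟨hg.1.comp_quasiMeasurePreserving (qmp c), ?_⟩
  refine lt_of_le_of_lt (eLpNorm_comp_add_le hp c hg.1) ?_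
  exact ENNReal.mul_lt_top ENNReal.ofReal_lt_top hg.2

/-- The translation map on `Lp`, as a bare function. -/
def TcFun (hp : p ≠ ∞) (c : ℝ) (φ : Lp ℝ p mc) : Lp ℝ p mc :=
  (memLp_comp hp c (Lp.memLp φ)).toLp (fun x => (φ : ℝ → ℝ) (x + c))

lemma TcFun_coe (hp : p ≠ ∞) (c : ℝ) (φ : Lp ℝ p mc) :
    ⇑(TcFun hp c φ) =ᵐ[mc] fun x => (φ : ℝ → ℝ) (x + c) := MemLp.coeFn_toLp _

lemma TcFun_add (hp : p ≠ ∞) (c : ℝ) (φ ψ : Lp ℝ p mc) :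
    TcFun hp c (φ + ψ) = TcFun hp c φ + TcFun hp c ψ := by
  apply Lp.ext
  refine (TcFun_coe hp c (φ + ψ)).trans ?_ |>.trans
    (((Lp.coeFn_add (TcFun hp c φ) (TcFun hp c ψ)).trans
      ((TcFun_coe hp c φ).add (TcFun_coe hp c ψ))).symm)
  refine (ae_comp c (Lp.coeFn_add φ ψ)).trans ?_
  filter_upwards with x
  rfl

lemma TcFun_smul (hp : p ≠ ∞) (c : ℝ) (a : ℝ) (φ : Lp ℝ p mc) :
    TcFun hp c (a • φ) = a • TcFun hp c φ := by
  apply Lp.ext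
  refine (TcFun_coe hp c (a • φ)).trans ?_ |>.trans
    (((Lp.coeFn_smul a (TcFun hp c φ)).trans
      ((TcFun_coe hp c φ).const_smul a)).symm)
  refine (ae_comp c (Lp.coeFn_smul a φ)).trans ?_
  filter_upwards with x
  rfl

lemma TcFun_norm_le (hp : p ≠ ∞) (c : ℝ) (φ : Lp ℝ p mc) :
    ‖TcFun hp c φ‖ ≤ (2 + 2 * c ^ 2) ^ (1 / p.toReal) * ‖φ‖ := by
  rw [TcFun, Lp.norm_toLp]
  have h := eLpNorm_comp_add_le (g := (φ : ℝ → ℝ)) hp c (Lp.aestronglyMeasurable φ)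
  have hfin : ENNReal.ofReal ((2 + 2 * c ^ 2) ^ (1 / p.toReal)) *
      eLpNorm (φ : ℝ → ℝ) p mc ≠ ⊤ :=
    (ENNReal.mul_lt_top ENNReal.ofReal_lt_top (Lp.eLpNorm_lt_top φ)).ne
  calc (eLpNorm (fun x => (φ : ℝ → ℝ) (x + c)) p mc).toReal
      ≤ (ENNReal.ofReal ((2 + 2 * c ^ 2) ^ (1 / p.toReal)) *
          eLpNorm (φ : ℝ → ℝ) p mc).toReal := ENNReal.toReal_mono hfin h
    _ = (2 + 2 * c ^ 2) ^ (1 / p.toReal) * ‖φ‖ := by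
        rw [ENNReal.toReal_mul, ENNReal.toReal_ofReal (by positivity), Lp.norm_def]

/-- The translation (composition) operator on `Lp`. -/
def Tc (hp : p ≠ ∞) (c : ℝ) : Lp ℝ p mc →L[ℝ] Lp ℝ p mc :=
  LinearMap.mkContinuous
    { toFun := TcFun hp c
      map_add' := TcFun_add hp c
      map_smul' := fun a φ => by simpa using TcFun_smul hp c a φ }
    ((2 + 2 * c ^ 2) ^ (1 / p.toReal))
    (fun φ => TcFun_norm_le hp c φ)

lemma Tc_coe (hp : p ≠ ∞) (c : ℝ) (φ : Lp ℝ p mc) :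
    ⇑(Tc hp c φ) =ᵐ[mc] fun x => (φ : ℝ → ℝ) (x + c) := TcFun_coe hp c φ

lemma Tc_Tc (hp : p ≠ ∞) (c d : ℝ) (φ : Lp ℝ p mc) :
    Tc hp c (Tc hp d φ) = Tc hp (c + d) φ := by
  apply Lp.ext
  refine ((Tc_coe hp c _).trans ?_).trans (Tc_coe hp (c + d) φ).symm
  refine (ae_comp c (Tc_coe hp d φ)).trans ?_
  filter_upwards with x
  rw [add_assoc]

lemma Tc_zero (hp : p ≠ ∞) (φ : Lp ℝ p mc) : Tc hp 0 φ = φ := by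
  apply Lp.ext
  refine (Tc_coe hp 0 φ).trans ?_
  filter_upwards with x
  rw [add_zero]

/-- The composition operator `φ ↦ φ(· + 1)` as a continuous linear equivalence. -/
def Teq (hp : p ≠ ∞) : Lp ℝ p mc ≃L[ℝ] Lp ℝ p mc :=
  ContinuousLinearEquiv.equivOfInverse (Tc hp 1) (Tc hp (-1))
    (fun φ => by
      rw [Tc_Tc, show (-1 : ℝ) + 1 = 0 by norm_num]
      exact Tc_zero hp φ)
    (fun φ => by
      rw [Tc_Tc, show (1 : ℝ) + -1 = 0 by norm_num]
      exact Tc_zero hp φ)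

lemma Teq_coe (hp : p ≠ ∞) (φ : Lp ℝ p mc) :
    ⇑(Teq hp φ) =ᵐ[mc] fun x => (φ : ℝ → ℝ) (x + 1) := Tc_coe hp 1 φ

lemma Teq_zpow_coe (hp : p ≠ ∞) (k : ℤ) :
    ∀ φ : Lp ℝ p mc, ⇑((Teq hp ^ k) φ) =ᵐ[mc] fun x => (φ : ℝ → ℝ) (x + (k : ℝ)) := by
  induction k using Int.induction_on with
  | zero =>
      intro φ
      have h : ((Teq hp) ^ (0:ℤ)) φ = φ := by rw [zpow_zero]; rfl
      rw [h]
      filter_upwards with x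
      norm_num
  | succ n ih =>
      intro φ
      have hmul : ((Teq hp) ^ ((n:ℤ) + 1)) φ = ((Teq hp) ^ (n:ℤ)) (Teq hp φ) := by
        rw [zpow_add_one]; rfl
      rw [hmul]
      refine (ih (Teq hp φ)).trans ?_
      refine (ae_comp ((n:ℤ):ℝ) (Teq_coe hp φ)).trans ?_
      filter_upwards with x
      have hx : x + ((n:ℤ):ℝ) + 1 = x + (((n:ℤ) + 1 : ℤ) : ℝ) := by push_cast; ring
      rw [hx]
  | pred n ih =>
      intro φ
      have hmul : Teq hp (((Teq hp) ^ (-(n:ℤ) - 1)) φ) = ((Teq hp) ^ (-(n:ℤ))) φ := by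
      
        have h : (Teq hp) ^ (-(n:ℤ)) = (Teq hp) ^ ((1:ℤ) + (-(n:ℤ) - 1)) := by ring_nf
        rw [h, zpow_add, zpow_one]; rfl
      set ψ := ((Teq hp) ^ (-(n:ℤ) - 1)) φ with hψ
      have h1 : ⇑(Teq hp ψ) =ᵐ[mc] fun x => (ψ : ℝ → ℝ) (x + 1) := Teq_coe hp ψ
      have h2 : ⇑(Teq hp ψ) =ᵐ[mc] fun x => (φ : ℝ → ℝ) (x + ((-(n:ℤ) : ℤ) : ℝ)) := by
        rw [hmul]; exact ih φ
      have h3 : (fun x => (ψ : ℝ → ℝ) (x + 1)) =ᵐ[mc]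
          fun x => (φ : ℝ → ℝ) (x + ((-(n:ℤ) : ℤ) : ℝ)) := h1.symm.trans h2
      have h4 := ae_comp (-1 : ℝ) h3
      refine Filter.EventuallyEq.trans ?_ (h4.trans ?_)
      · filter_upwards with x
        have hx : x + -1 + 1 = x := by ring
        rw [hx]
      · filter_upwards with x
        have hx : x + -1 + ((-(n:ℤ) : ℤ) : ℝ) = x + ((-(n:ℤ) - 1 : ℤ) : ℝ) := by
          push_cast; ring
        rw [hx]

lemma norm_le_zpow (hp : p ≠ ∞) (k : ℤ) (φ : Lp ℝ p mc) :
    ‖φ‖ ≤ (2 + 2 * (k:ℝ) ^ 2) ^ (1 / p.toReal) * ‖((Teq hp) ^ k) φ‖ := by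
  set ψ := ((Teq hp) ^ k) φ with hψ
  have h1 : ⇑ψ =ᵐ[mc] fun x => (φ : ℝ → ℝ) (x + (k:ℝ)) := Teq_zpow_coe hp k φ
  have h2 : (fun x => (ψ : ℝ → ℝ) (x + (-(k:ℝ)))) =ᵐ[mc] ⇑φ := by
    refine (ae_comp (-(k:ℝ)) h1).trans ?_
    filter_upwards with x
    have hx : x + -(k:ℝ) + k = x := by ring
    rw [hx]
  have h3 : eLpNorm (φ : ℝ → ℝ) p mc
      = eLpNorm (fun x => (ψ : ℝ → ℝ) (x + (-(k:ℝ)))) p mc :=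
    (eLpNorm_congr_ae h2).symm
  have h4 := eLpNorm_comp_add_le (g := (ψ : ℝ → ℝ)) hp (-(k:ℝ))
    (Lp.aestronglyMeasurable ψ)
  have hfin : ENNReal.ofReal ((2 + 2 * (-(k:ℝ)) ^ 2) ^ (1 / p.toReal)) *
      eLpNorm (ψ : ℝ → ℝ) p mc ≠ ⊤ :=
    (ENNReal.mul_lt_top ENNReal.ofReal_lt_top (Lp.eLpNorm_lt_top ψ)).ne
  have hK : ((2 + 2 * (-(k:ℝ)) ^ 2) ^ (1 / p.toReal))
      = (2 + 2 * (k:ℝ) ^ 2) ^ (1 / p.toReal) := by ring_nf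
  rw [Lp.norm_def, Lp.norm_def, h3]
  calc (eLpNorm (fun x => (ψ : ℝ → ℝ) (x + (-(k:ℝ)))) p mc).toReal
      ≤ (ENNReal.ofReal ((2 + 2 * (-(k:ℝ)) ^ 2) ^ (1 / p.toReal)) *
          eLpNorm (ψ : ℝ → ℝ) p mc).toReal := ENNReal.toReal_mono hfin h4
    _ = (2 + 2 * (k:ℝ) ^ 2) ^ (1 / p.toReal) * (eLpNorm (ψ : ℝ → ℝ) p mc).toReal := by
        rw [ENNReal.toReal_mul, ENNReal.toReal_ofReal (by positivity), hK]

lemma measure_Icc_le (j : ℕ) (hj : 1 ≤ j) :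
    mc (Icc (-(j:ℝ)) (1 - j)) ≤ ENNReal.ofReal (1 / (j:ℝ)^2) := by
  have hjR : (1:ℝ) ≤ (j:ℝ) := by exact_mod_cast hj
  rw [cauchy_eq, withDensity_apply _ measurableSet_Icc]
  have hb : ∀ x ∈ Icc (-(j:ℝ)) (1 - j), den x ≤ ENNReal.ofReal (1/(j:ℝ)^2) := by
    intro x hx
    obtain ⟨hx1, hx2⟩ := hx
    apply ENNReal.ofReal_le_ofReal
    have hpi := Real.pi_gt_three
    have h1 : (0:ℝ) < Real.pi * (1 + x ^ 2) := by nlinarith [sq_nonneg x]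
    rw [div_le_div_iff₀ h1 (by positivity)]
    have hprod : (0:ℝ) ≤ ((j:ℝ) - 1 - x) * (1 - (j:ℝ) - x) :=
      mul_nonneg (by linarith) (by linarith)
    nlinarith [sq_nonneg ((j:ℝ) - 3/2), sq_nonneg x]
  calc ∫⁻ x in Icc (-(j:ℝ)) (1-(j:ℝ)), den x
      ≤ ∫⁻ _ in Icc (-(j:ℝ)) (1-(j:ℝ)), ENNReal.ofReal (1/(j:ℝ)^2) :=
        setLIntegral_mono measurable_const hb
    _ = ENNReal.ofReal (1/(j:ℝ)^2) * volume (Icc (-(j:ℝ)) (1-(j:ℝ))) :=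
        setLIntegral_const _ _
    _ = ENNReal.ofReal (1/(j:ℝ)^2) := by
        rw [Real.volume_Icc, show (1 - (j:ℝ) - -(j:ℝ)) = 1 by ring,
          ENNReal.ofReal_one, mul_one]

lemma measure_Icc01_pos : 0 < mc (Icc (0:ℝ) 1) := by
  have hpi := Real.pi_pos
  rw [cauchy_eq, withDensity_apply _ measurableSet_Icc]
  have hb : ∀ x ∈ Icc (0:ℝ) 1, ENNReal.ofReal (1/(2*Real.pi)) ≤ den x := by
    intro x hx
    obtain ⟨hx1, hx2⟩ := hx
    apply ENNReal.ofReal_le_ofReal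
    rw [div_le_div_iff₀ (by positivity) (by positivity)]
    nlinarith [mul_nonneg hpi.le
      (mul_nonneg (by linarith : (0:ℝ) ≤ 1 - x) (by linarith : (0:ℝ) ≤ 1 + x))]
  have hlow : ENNReal.ofReal (1/(2*Real.pi)) * volume (Icc (0:ℝ) 1)
      ≤ ∫⁻ x in Icc (0:ℝ) 1, den x := by
    rw [← setLIntegral_const]
    exact setLIntegral_mono den_meas hb
  refine lt_of_lt_of_le ?_ hlow
  rw [Real.volume_Icc, show (1:ℝ) - 0 = 1 by ring, ENNReal.ofReal_one, mul_one]
  exact ENNReal.ofReal_pos.mpr (by positivity)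

lemma measure_Icc01_lt_top : mc (Icc (0:ℝ) 1) < ⊤ := by
  rw [cauchy_eq, withDensity_apply _ measurableSet_Icc]
  have hb : ∀ x ∈ Icc (0:ℝ) 1, den x ≤ 1 := by
    intro x hx
    rw [← ENNReal.ofReal_one]
    apply ENNReal.ofReal_le_ofReal
    have hpi := Real.pi_gt_three
    rw [div_le_one (by nlinarith [sq_nonneg x])]
    nlinarith [sq_nonneg x]
  calc ∫⁻ x in Icc (0:ℝ) 1, den x ≤ ∫⁻ _ in Icc (0:ℝ) 1, 1 :=
        setLIntegral_mono measurable_const hb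
    _ = 1 * volume (Icc (0:ℝ) 1) := setLIntegral_const _ _
    _ = ENNReal.ofReal 1 := by
        rw [Real.volume_Icc, show (1:ℝ) - 0 = 1 by ring, one_mul]
    _ < ⊤ := ENNReal.ofReal_lt_top


/-- norms of the iterates of the indicator block. -/
def aSeq (hp : p ≠ ∞) (w : Lp ℝ p mc) (j : ℕ) : ℝ := ‖((Teq hp) ^ (j:ℤ)) w‖

/-- accumulated coefficients of the pseudo-orbit. -/
def BSeq (hp : p ≠ ∞) (w : Lp ℝ p mc) (δ : ℝ) (n : ℕ) : ℝ :=
  δ * ∑ j ∈ Finset.range n, (aSeq hp w (j+1))⁻¹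

/-- the pseudo-orbit. -/
def xSeq (hp : p ≠ ∞) (w : Lp ℝ p mc) (δ : ℝ) (k : ℤ) : Lp ℝ p mc :=
  if 0 ≤ k then BSeq hp w δ k.toNat • (((Teq hp) ^ k) w) else 0

lemma xSeq_orbit (hp : p ≠ ∞) (w : Lp ℝ p mc) {δ : ℝ} (hδ : 0 < δ)
    (hapos : ∀ j : ℕ, 0 < aSeq hp w j) (k : ℤ) :
    ‖Teq hp (xSeq hp w δ k) - xSeq hp w δ (k + 1)‖ ≤ δ := by
  rcases le_or_gt 0 k with hk | hk
  · have hk1 : (0:ℤ) ≤ k + 1 := by omega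
    have ht : (k+1).toNat = k.toNat + 1 := by omega
    simp only [xSeq]
    rw [if_pos hk, if_pos hk1, ht]
    have hTT : Teq hp (((Teq hp) ^ k) w) = ((Teq hp) ^ (k+1)) w := by
      rw [add_comm, zpow_add, zpow_one]; rfl
    rw [_root_.map_smul, hTT, ← sub_smul, norm_smul, Real.norm_eq_abs]
    have hcast : (k + 1 : ℤ) = ((k.toNat + 1 : ℕ) : ℤ) := by omega
    have hka : ‖((Teq hp) ^ (k+1)) w‖ = aSeq hp w (k.toNat + 1) := by
      rw [aSeq, ← hcast]
    rw [hka]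
    have hB : BSeq hp w δ k.toNat - BSeq hp w δ (k.toNat + 1)
        = -(δ * (aSeq hp w (k.toNat+1))⁻¹) := by
      rw [BSeq, BSeq, Finset.sum_range_succ]
      ring
    rw [hB, abs_neg, abs_of_nonneg (mul_nonneg hδ.le (inv_nonneg.mpr (hapos _).le))]
    rw [mul_assoc, inv_mul_cancel₀ (hapos (k.toNat+1)).ne', mul_one]
  · have hxk : xSeq hp w δ k = 0 := by
      simp only [xSeq]; rw [if_neg (by omega)]
    by_cases hk1 : (0:ℤ) ≤ k + 1
    · have hk0 : k + 1 = 0 := by omega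
      have hx1 : xSeq hp w δ (k+1) = 0 := by
        simp only [xSeq]
        rw [if_pos hk1, hk0]
        rw [show ((0:ℤ)).toNat = 0 from rfl, BSeq, Finset.range_zero,
          Finset.sum_empty, mul_zero, zero_smul]
      rw [hxk, hx1, map_zero, sub_zero, norm_zero]
      exact hδ.le
    · have hx1 : xSeq hp w δ (k+1) = 0 := by
        simp only [xSeq]; rw [if_neg hk1]
      rw [hxk, hx1, map_zero, sub_zero, norm_zero]
      exact hδ.le

set_option maxHeartbeats 1000000 in
lemma not_shadowing (hp : p ≠ ∞) : ¬ HasShadowing (Teq hp) := by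
  intro hsh
  obtain ⟨δ, hδ, hshad⟩ := hsh 1 one_pos
  have hp0 : p ≠ 0 := p_ne_zero
  have hpt1 : (1:ℝ) ≤ p.toReal := one_le_toReal hp
  have hs_pos : 0 < 1 / p.toReal := by positivity
  have hs_le1 : 1 / p.toReal ≤ 1 := by
    rw [div_le_one (by linarith)]; linarith
  set w : Lp ℝ p mc :=
    indicatorConstLp p measurableSet_Icc measure_Icc01_lt_top.ne (1:ℝ) with hw
  have hw_pos : 0 < ‖w‖ := by
    rw [hw, norm_indicatorConstLp hp0 hp, norm_one, one_mul]
    exact Real.rpow_pos_of_pos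
      (ENNReal.toReal_pos measure_Icc01_pos.ne' measure_Icc01_lt_top.ne) _
  have hTw_coe : ∀ j : ℕ, ⇑(((Teq hp) ^ (j:ℤ)) w) =ᵐ[mc]
      (Icc (-(j:ℝ)) (1-(j:ℝ))).indicator (fun _ => (1:ℝ)) := by
    intro j
    refine (Teq_zpow_coe hp (j:ℤ) w).trans ?_
    have h1 : ⇑w =ᵐ[mc] (Icc (0:ℝ) 1).indicator (fun _ => (1:ℝ)) :=
      indicatorConstLp_coeFn
    have hc : (((j:ℤ)):ℝ) = (j:ℝ) := by push_cast; ring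
    rw [hc]
    refine (ae_comp (j:ℝ) h1).trans ?_
    filter_upwards with x
    simp only [Set.indicator_apply, Set.mem_Icc]
    have hiff : ((0:ℝ) ≤ x + j ∧ x + (j:ℝ) ≤ 1) ↔ (-(j:ℝ) ≤ x ∧ x ≤ 1 - j) := by
      constructor <;> rintro ⟨ha, hb⟩ <;> exact ⟨by linarith, by linarith⟩
    rw [if_congr hiff rfl rfl]
  have ha_eq : ∀ j : ℕ,
      aSeq hp w j = (mc (Icc (-(j:ℝ)) (1-(j:ℝ)))).toReal ^ (1 / p.toReal) := by
    intro j
    rw [aSeq, Lp.norm_def, eLpNorm_congr_ae (hTw_coe j),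
      eLpNorm_indicator_const measurableSet_Icc hp0 hp]
    rw [show ‖(1:ℝ)‖ₑ = 1 by simp, one_mul, ← ENNReal.toReal_rpow]
  have ha_le : ∀ j : ℕ, 1 ≤ j →
      aSeq hp w j ≤ ((((j:ℝ)^2) ^ (1 / p.toReal)))⁻¹ := by
    intro j hj
    have hj1 : (1:ℝ) ≤ (j:ℝ) := by exact_mod_cast hj
    rw [ha_eq j, ← Real.inv_rpow (by positivity)]
    apply Real.rpow_le_rpow ENNReal.toReal_nonneg ?_ hs_pos.le
    have h := measure_Icc_le j hj
    have h2 := ENNReal.toReal_le_of_le_ofReal (by positivity) h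
    rw [one_div] at h2
    exact h2
  have ha_pos : ∀ j : ℕ, 0 < aSeq hp w j := by
    intro j
    rcases (norm_nonneg (((Teq hp) ^ (j:ℤ)) w)).lt_or_eq with h | h
    · exact h
    · exfalso
      have hb := norm_le_zpow hp (j:ℤ) w
      rw [← h, mul_zero] at hb
      linarith [hw_pos]
  have horb := xSeq_orbit hp w hδ ha_pos
  obtain ⟨y, hy⟩ := hshad (xSeq hp w δ) horb
  obtain ⟨m, hm⟩ := exists_nat_gt ((‖y‖ + 10) / (δ * ‖w‖) + 1)
  have hδw : 0 < δ * ‖w‖ := mul_pos hδ hw_pos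
  have hm1 : (1:ℝ) ≤ (m:ℝ) := by
    have hpos : 0 < (‖y‖ + 10) / (δ * ‖w‖) := by positivity
    linarith
  have hmain : ‖y‖ + 10 < δ * (m:ℝ) * ‖w‖ := by
    have h := (div_lt_iff₀ hδw).mp (by linarith : (‖y‖ + 10) / (δ * ‖w‖) < (m:ℝ))
    have h2 : (m:ℝ) * (δ * ‖w‖) = δ * (m:ℝ) * ‖w‖ := by ring
    linarith
  set q : ℝ := ((m:ℝ)^2) ^ (1 / p.toReal) with hq
  have hq1 : 1 ≤ q := by
    rw [hq]
    exact Real.one_le_rpow (by nlinarith) hs_pos.le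
  have hq0 : 0 < q := lt_of_lt_of_le one_pos hq1
  have hterm : ∀ j ∈ Finset.Ico m (2*m), q ≤ (aSeq hp w (j+1))⁻¹ := by
    intro j hj
    obtain ⟨hj1, hj2⟩ := Finset.mem_Ico.mp hj
    have hle := ha_le (j+1) (by omega)
    have hpos := ha_pos (j+1)
    have hq_le : q ≤ (((j+1:ℕ):ℝ)^2) ^ (1 / p.toReal) := by
      rw [hq]
      apply Real.rpow_le_rpow (by positivity) ?_ hs_pos.le
      have hmj : (m:ℝ) ≤ ((j+1:ℕ):ℝ) := by exact_mod_cast (by omega : m ≤ j + 1)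
      nlinarith [hm1]
    refine hq_le.trans ?_
    rw [← inv_inv ((((j+1:ℕ):ℝ)^2) ^ (1 / p.toReal))]
    exact inv_anti₀ hpos hle
  have hsum : (m:ℝ) * q ≤ ∑ j ∈ Finset.range (2*m), (aSeq hp w (j+1))⁻¹ := by
    have hsub : Finset.Ico m (2*m) ⊆ Finset.range (2*m) := by
      intro j hj
      rw [Finset.mem_range]
      exact (Finset.mem_Ico.mp hj).2
    have hcard := Finset.card_nsmul_le_sum (Finset.Ico m (2*m))
      (fun j => (aSeq hp w (j+1))⁻¹) q hterm
    rw [Nat.card_Ico, (by omega : 2*m - m = m)] at hcard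
    rw [nsmul_eq_mul] at hcard
    refine hcard.trans ?_
    apply Finset.sum_le_sum_of_subset_of_nonneg hsub
    intro j _ _
    exact inv_nonneg.mpr (ha_pos _).le
  have hB_low : δ * ((m:ℝ) * q) ≤ BSeq hp w δ (2*m) := by
    rw [BSeq]
    exact mul_le_mul_of_nonneg_left hsum hδ.le
  have hk := hy ((2*m : ℕ) : ℤ)
  have hxk : xSeq hp w δ ((2*m:ℕ):ℤ)
      = BSeq hp w δ (2*m) • (((Teq hp) ^ ((2*m:ℕ):ℤ)) w) := by
    have ht : (((2*m:ℕ):ℤ)).toNat = 2*m := by omega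
    simp only [xSeq]
    rw [if_pos (by positivity : (0:ℤ) ≤ ((2*m:ℕ):ℤ)), ht]
  rw [hxk] at hk
  have hsub2 : ((Teq hp) ^ ((2*m:ℕ):ℤ)) y
        - BSeq hp w δ (2*m) • (((Teq hp) ^ ((2*m:ℕ):ℤ)) w)
      = ((Teq hp) ^ ((2*m:ℕ):ℤ)) (y - BSeq hp w δ (2*m) • w) := by
    rw [map_sub, _root_.map_smul]
  rw [hsub2] at hk
  have hnb := norm_le_zpow hp ((2*m:ℕ):ℤ) (y - BSeq hp w δ (2*m) • w)
  have hcast2 : ((((2*m:ℕ)):ℤ):ℝ) = 2*(m:ℝ) := by push_cast; ring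
  rw [hcast2] at hnb
  have h7 : ‖y - BSeq hp w δ (2*m) • w‖ ≤ (2 + 2*(2*(m:ℝ))^2) ^ (1 / p.toReal) := by
    refine hnb.trans ?_
    have := mul_le_mul_of_nonneg_left hk.le
      (by positivity : (0:ℝ) ≤ (2 + 2*(2*(m:ℝ))^2) ^ (1 / p.toReal))
    simpa using this
  have h8 : (2 + 2*(2*(m:ℝ))^2) ^ (1 / p.toReal) ≤ 10 * q := by
    have e1 : (2 + 2*(2*(m:ℝ))^2) ^ (1/p.toReal) ≤ ((10:ℝ) * (m:ℝ)^2) ^ (1/p.toReal) :=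
      Real.rpow_le_rpow (by positivity) (by nlinarith [hm1]) hs_pos.le
    have e2 : ((10:ℝ) * (m:ℝ)^2) ^ (1/p.toReal) = (10:ℝ)^(1/p.toReal) * q := by
      rw [hq, Real.mul_rpow (by norm_num) (by positivity)]
    have e3 : (10:ℝ)^(1/p.toReal) ≤ 10 := by
      calc (10:ℝ)^(1/p.toReal) ≤ (10:ℝ)^(1:ℝ) :=
            Real.rpow_le_rpow_of_exponent_le (by norm_num) hs_le1
        _ = 10 := Real.rpow_one 10
    calc (2 + 2*(2*(m:ℝ))^2) ^ (1/p.toReal) ≤ (10:ℝ)^(1/p.toReal) * q := by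
          rw [← e2]; exact e1
      _ ≤ 10 * q := mul_le_mul_of_nonneg_right e3 hq0.le
  have hBnn : 0 ≤ BSeq hp w δ (2*m) :=
    le_trans (by positivity) hB_low
  have h9 : BSeq hp w δ (2*m) * ‖w‖ - ‖y‖ ≤ ‖y - BSeq hp w δ (2*m) • w‖ := by
    have h := norm_sub_norm_le (BSeq hp w δ (2*m) • w) y
    rw [norm_smul, Real.norm_eq_abs, abs_of_nonneg hBnn, norm_sub_rev] at h
    linarith
  have hfin1 : δ * ((m:ℝ) * q) * ‖w‖ ≤ BSeq hp w δ (2*m) * ‖w‖ :=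
    mul_le_mul_of_nonneg_right hB_low hw_pos.le
  have hfin2 : BSeq hp w δ (2*m) * ‖w‖ ≤ ‖y‖ + 10 * q := by
    have := h7.trans h8
    linarith
  have hyq : ‖y‖ ≤ ‖y‖ * q := le_mul_of_one_le_right (norm_nonneg y) hq1
  have hlt := mul_lt_mul_of_pos_right hmain hq0
  nlinarith [hfin1, hfin2, hyq, hlt, hq0]


end CauchyAux

/-- Example "Non-Shadowing": for the standard Cauchy distribution `μ`
on `ℝ` and `f(x) = x + 1`, the composition operator `T_f φ = φ ∘ f` is a well-defined
invertible bounded linear operator on `L^p(ℝ, μ)` which does NOT have the shadowing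
property. -/
theorem cauchy_composition_not_shadowing
    (p : ℝ≥0∞) [Fact (1 ≤ p)] (hp : p ≠ ⊤) :
    ∃ T : Lp ℝ p cauchyMeasure ≃L[ℝ] Lp ℝ p cauchyMeasure,
      (∀ φ : Lp ℝ p cauchyMeasure,
        ⇑(T φ) =ᵐ[cauchyMeasure] fun x => (φ : ℝ → ℝ) (x + 1)) ∧
      ¬ HasShadowing T :=
  ⟨CauchyAux.Teq hp, CauchyAux.Teq_coe hp, CauchyAux.not_shadowing hp⟩

end GHShadow
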